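/- Let T be a finite tree with at least one edge that is domination-unmixed, and let {x_1y_1, ..., x_ky_k} be a matching of T of maximum size. Then for each i = 1,...,k, either x_i has degree 1 in T or y_i has degree 1 in T. -/

import Mathlib

/-- `D` is a dominating set of the graph `G`: every vertex is in `D` or adjacent to a
vertex of `D`. -/
def IsDomSet {V : Type*} (G : SimpleGraph V) (D : Finset V) : Prop :=
  ∀ v : V, v ∈ D ∨ ∃ u ∈ D, G.Adj u v

/-- `D` is a minimal dominating set of `G`: it is dominating and properly contains no
dominating set. -/
def IsMinDomSet {V : Type*} (G : SimpleGraph V) (D : Finset V) : Prop :=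
  IsDomSet G D ∧ ∀ D' ⊆ D, IsDomSet G D' → D' = D

/-- A graph is domination-unmixed if all of its minimal dominating sets have the same
size. -/
def DomUnmixed {V : Type*} (G : SimpleGraph V) : Prop :=
  ∀ D D' : Finset V, IsMinDomSet G D → IsMinDomSet G D' → D.card = D'.card

/-- `M` is a matching of `G`: a set of edges of `G` that pairwise share no vertex. -/
def IsMatching' {V : Type*} (G : SimpleGraph V) (M : Finset (Sym2 V)) : Prop :=
  (∀ e ∈ M, e ∈ G.edgeSet) ∧
  ∀ e ∈ M, ∀ f ∈ M, e ≠ f → ∀ v : V, ¬(v ∈ e ∧ v ∈ f)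


open SimpleGraph Finset

section Aux
variable {V : Type*} {T : SimpleGraph V}

lemma sym2_out (e : Sym2 V) : s(e.out.1, e.out.2) = e := by
  conv_rhs => rw [← e.out_eq]

lemma mem_mem_adj {e : Sym2 V} (he : e ∈ T.edgeSet) {u v : V} (hu : u ∈ e) (hv : v ∈ e)
    (hne : u ≠ v) : T.Adj u v := by
  induction e with
  | _ a b =>
    rw [Sym2.mem_iff] at hu hv
    rw [T.mem_edgeSet] at he
    rcases hu with rfl | rfl <;> rcases hv with rfl | rfl
    · exact absurd rfl hne
    · exact he
    · exact he.symm
    · exact absurd rfl hne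

lemma adj_dist_eq_one {u v : V} (h : T.Adj u v) : T.dist u v = 1 :=
  SimpleGraph.dist_eq_one_iff_adj.2 h

/-- In a tree, distances to a fixed vertex of adjacent vertices differ by exactly one. -/
lemma tree_adj_dist (hT : T.IsTree) (x : V) {a b : V} (h : T.Adj a b) :
    T.dist x b = T.dist x a + 1 ∨ T.dist x a = T.dist x b + 1 := by
  classical
  obtain ⟨w, hw⟩ := hT.isConnected.exists_walk_length_eq_dist x a
  set q := w.bypass with hq
  have hqp : q.IsPath := w.bypass_isPath
  have hqlen : q.length = T.dist x a := by
    refine le_antisymm ?_ (T.dist_le q)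
    rw [← hw]; exact w.length_bypass_le
  by_cases hb : b ∈ q.support
  · right
    set q1 := q.takeUntil b hb with hq1
    set q2 := q.dropUntil b hb with hq2
    have hsum : q1.length + q2.length = q.length := by
      have := congrArg SimpleGraph.Walk.length (q.take_spec hb)
      rwa [SimpleGraph.Walk.length_append] at this
    have hq2p : q2.IsPath := hqp.dropUntil hb
    have h21 : q2.length = 1 := by
      have := hT.IsAcyclic.path_unique ⟨q2, hq2p⟩ (SimpleGraph.Path.singleton h.symm)
      have := congrArg (fun p : T.Path b a => p.1.length) this
      simpa [SimpleGraph.Path.singleton] using this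
    have hd1 : T.dist x b ≤ q1.length := T.dist_le q1
    have hd2 : T.dist x a ≤ T.dist x b + 1 := by
      have := hT.isConnected.dist_triangle (u := x) (v := b) (w := a)
      rwa [adj_dist_eq_one h.symm] at this
    omega
  · left
    have hcons : ((SimpleGraph.Walk.cons h.symm q.reverse) : T.Walk b x).IsPath := by
      refine hqp.reverse.cons ?_
      rwa [SimpleGraph.Walk.support_reverse, List.mem_reverse]
    obtain ⟨w2, hw2⟩ := hT.isConnected.exists_walk_length_eq_dist x b
    have hw2p : w2.bypass.IsPath := w2.bypass_isPath
    have hw2len : w2.bypass.length = T.dist x b := by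
      refine le_antisymm ?_ (T.dist_le w2.bypass)
      rw [← hw2]; exact w2.length_bypass_le
    have := hT.IsAcyclic.path_unique ⟨w2.bypass.reverse, hw2p.reverse⟩
      ⟨SimpleGraph.Walk.cons h.symm q.reverse, hcons⟩
    have hlen := congrArg (fun p : T.Path b x => p.1.length) this
    simp only [SimpleGraph.Walk.length_reverse, SimpleGraph.Walk.length_cons] at hlen
    omega

/-- In a connected graph, each vertex at positive distance from `x` has a neighbor
strictly closer to `x`. -/
lemma exists_closer_nbr (hc : T.Connected) (x : V) {v : V} (h : T.dist x v ≠ 0) :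
    ∃ u, T.Adj u v ∧ T.dist x u + 1 = T.dist x v := by
  classical
  obtain ⟨w, hw⟩ := hc.exists_walk_length_eq_dist x v
  rcases hrev : w.reverse with _ | ⟨hadj, t⟩
  · rw [SimpleGraph.dist_self] at h
    exact absurd rfl h
  · rename_i u
    refine ⟨u, hadj.symm, ?_⟩
    have hlt : t.length + 1 = T.dist x v := by
      have := congrArg SimpleGraph.Walk.length hrev
      simp only [SimpleGraph.Walk.length_reverse, SimpleGraph.Walk.length_cons] at this
      omega
    have h1 : T.dist x u ≤ t.length := by
      have := T.dist_le t.reverse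
      rwa [SimpleGraph.Walk.length_reverse] at this
    have h2 : T.dist x v ≤ T.dist x u + 1 := by
      have := hc.dist_triangle (u := x) (v := u) (w := v)
      rwa [adj_dist_eq_one hadj.symm] at this
    omega

/-- Every dominating set contains a minimal dominating set. -/
lemma exists_minDomSet_subset (T : SimpleGraph V) :
    ∀ D : Finset V, IsDomSet T D → ∃ D' ⊆ D, IsMinDomSet T D' := by
  classical
  intro D
  induction D using Finset.strongInduction with
  | _ D ih =>
    intro hD
    by_cases h : ∀ D' ⊆ D, IsDomSet T D' → D' = D
    · exact ⟨D, Finset.Subset.refl D, hD, h⟩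
    · push_neg at h
      obtain ⟨D', hsub, hdom, hne⟩ := h
      obtain ⟨D'', h1, h2⟩ := ih D' (Finset.ssubset_iff_subset_ne.2 ⟨hsub, hne⟩) hdom
      exact ⟨D'', h1.trans hsub, h2⟩

end Aux

section Matching
variable {V : Type*} {T : SimpleGraph V}

lemma IsMatching'.subset {M M' : Finset (Sym2 V)} (h : IsMatching' T M) (hs : M' ⊆ M) :
    IsMatching' T M' :=
  ⟨fun e he => h.1 e (hs he), fun e he f hf hne v hv => h.2 e (hs he) f (hs hf) hne v hv⟩

lemma IsMatching'.insert [DecidableEq (Sym2 V)] {M : Finset (Sym2 V)} (h : IsMatching' T M) {e : Sym2 V}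
    (he : e ∈ T.edgeSet) (hd : ∀ f ∈ M, ∀ v : V, ¬(v ∈ e ∧ v ∈ f)) :
    IsMatching' T (insert e M) ∧ (insert e M).card = M.card + 1 := by
  classical
  have hem : e ∉ M := fun hem => hd e hem e.out.1 ⟨e.out_fst_mem, e.out_fst_mem⟩
  refine ⟨⟨?_, ?_⟩, Finset.card_insert_of_notMem hem⟩
  · intro f hf
    rcases Finset.mem_insert.1 hf with rfl | hf
    · exact he
    · exact h.1 f hf
  · intro f hf g hg hne v
    rcases Finset.mem_insert.1 hf with rfl | hf2
    · rcases Finset.mem_insert.1 hg with rfl | hg2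
      · exact absurd rfl hne
      · exact hd g hg2 v
    · rcases Finset.mem_insert.1 hg with rfl | hg2
      · rintro ⟨h1, h2⟩; exact hd f hf2 v ⟨h2, h1⟩
      · exact h.2 f hf2 g hg2 hne v

end Matching

/-- In a domination-unmixed finite tree with at least one edge, every edge of a maximum
matching has an endpoint of degree one. -/
theorem stmt15 {V : Type*} [Fintype V] (T : SimpleGraph V) [DecidableRel T.Adj]
    (hT : T.IsTree) (hE : T.edgeSet.Nonempty) (hunm : DomUnmixed T)
    (M : Finset (Sym2 V)) (hM : IsMatching' T M)
    (hmax : ∀ M' : Finset (Sym2 V), IsMatching' T M' → M'.card ≤ M.card) :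
    ∀ e ∈ M, ∃ x y : V, e = s(x, y) ∧ (T.degree x = 1 ∨ T.degree y = 1) := by
  classical
  intro e he
  have heE : e ∈ T.edgeSet := hM.1 e he
  obtain ⟨x, y, rfl⟩ : ∃ x y, e = s(x, y) := ⟨e.out.1, e.out.2, (sym2_out e).symm⟩
  refine ⟨x, y, rfl, ?_⟩
  have hxy : T.Adj x y := T.mem_edgeSet.1 heE
  by_contra hcon
  push_neg at hcon
  obtain ⟨hdx, hdy⟩ := hcon
  have hconn := hT.isConnected
  -- every vertex has a neighbor
  have hnbr : ∀ v : V, ∃ w, T.Adj v w := by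
    intro v
    by_cases hvx : v = x
    · exact ⟨y, hvx ▸ hxy⟩
    · have h0 : T.dist x v ≠ 0 := fun h0 => hvx ((hconn.dist_eq_zero_iff).1 h0).symm
      obtain ⟨u, hu, _⟩ := exists_closer_nbr hconn x h0
      exact ⟨u, hu.symm⟩
  -- two unmatched vertices are never adjacent
  have aug0 : ∀ u w : V, ¬(∃ f ∈ M, u ∈ f) → ¬(∃ f ∈ M, w ∈ f) → T.Adj u w → False := by
    intro u w hu hw huw
    have hins := hM.insert (e := s(u, w)) (T.mem_edgeSet.2 huw) ?_
    · have := hmax _ hins.1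
      rw [hins.2] at this
      omega
    · intro f hf v hv
      rcases hv with ⟨hv1, hv2⟩
      rcases Sym2.mem_iff.1 hv1 with rfl | rfl
      · exact hu ⟨f, hf, hv2⟩
      · exact hw ⟨f, hf, hv2⟩
  -- no augmenting path of length 3
  have aug1 : ∀ a b : V, s(a, b) ∈ M → ∀ u v : V, ¬(∃ f ∈ M, u ∈ f) → ¬(∃ f ∈ M, v ∈ f) →
      u ≠ v → T.Adj u a → T.Adj v b → False := by
    intro a b hab u v hu hv huv hua hvb
    have hM1 : IsMatching' T (M.erase s(a, b)) := hM.subset (Finset.erase_subset _ _)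
    have h2 := hM1.insert (e := s(v, b)) (T.mem_edgeSet.2 hvb) ?_
    · have h3 := h2.1.insert (e := s(u, a)) (T.mem_edgeSet.2 hua) ?_
      · have h4 := hmax _ h3.1
        rw [h3.2, h2.2, Finset.card_erase_of_mem hab] at h4
        have h5 : 0 < M.card := Finset.card_pos.2 ⟨_, hab⟩
        omega
      · intro f hf w hw
        rcases hw with ⟨hw1, hw2⟩
        rcases Finset.mem_insert.1 hf with rfl | hf2
        · rcases Sym2.mem_iff.1 hw1 with h4 | h4 <;> rcases Sym2.mem_iff.1 hw2 with h5 | h5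
          · exact huv (h4.symm.trans h5)
          · exact hu ⟨s(a, b), hab, by rw [h4.symm.trans h5]; exact Sym2.mem_mk_right a b⟩
          · exact hv ⟨s(a, b), hab, by rw [← (h4.symm.trans h5)]; exact Sym2.mem_mk_left a b⟩
          · exact (T.mem_edgeSet.1 (hM.1 _ hab)).ne (h4.symm.trans h5)
        · rcases Sym2.mem_iff.1 hw1 with h4 | h4
          · exact hu ⟨f, Finset.mem_of_mem_erase hf2, h4 ▸ hw2⟩
          · exact hM.2 s(a, b) hab f (Finset.mem_of_mem_erase hf2)
              (Finset.ne_of_mem_erase hf2).symm a ⟨Sym2.mem_mk_left a b, h4 ▸ hw2⟩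
    · intro f hf w hw
      rcases hw with ⟨hw1, hw2⟩
      rcases Sym2.mem_iff.1 hw1 with h4 | h4
      · exact hv ⟨f, Finset.mem_of_mem_erase hf, h4 ▸ hw2⟩
      · exact hM.2 s(a, b) hab f (Finset.mem_of_mem_erase hf)
          (Finset.ne_of_mem_erase hf).symm b ⟨Sym2.mem_mk_right a b, h4 ▸ hw2⟩
  -- the greedy endpoint choice
  set pick : Sym2 V → V := fun f =>
    if ∃ u : V, ¬(∃ g ∈ M, u ∈ g) ∧ T.Adj u f.out.1 then f.out.1 else f.out.2 with hpick
  have hpick_mem : ∀ f : Sym2 V, pick f ∈ f := by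
    intro f
    rw [hpick]
    dsimp only
    split
    · exact f.out_fst_mem
    · exact f.out_snd_mem
  have hD1dom : IsDomSet T (M.image pick) := by
    intro v
    by_cases hvm : ∃ f ∈ M, v ∈ f
    · obtain ⟨ev, hev, hvev⟩ := hvm
      by_cases hpv : pick ev = v
      · left; rw [← hpv]; exact Finset.mem_image_of_mem pick hev
      · right
        exact ⟨pick ev, Finset.mem_image_of_mem pick hev,
          mem_mem_adj (hM.1 ev hev) (hpick_mem ev) hvev hpv⟩
    · obtain ⟨w, hvw⟩ := hnbr v
      have hwm : ∃ f ∈ M, w ∈ f := by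
        by_contra hwm
        exact aug0 v w hvm hwm hvw
      obtain ⟨ew, hew, hwew⟩ := hwm
      have hsew : s(ew.out.1, ew.out.2) = ew := sym2_out ew
      have hadjew : T.Adj ew.out.1 ew.out.2 := by
        have h5 := hM.1 ew hew
        rw [← hsew] at h5
        exact T.mem_edgeSet.1 h5
      have hwew' : w ∈ s(ew.out.1, ew.out.2) := by rw [hsew]; exact hwew
      have hpw : pick ew = w := by
        rw [hpick]; dsimp only
        rcases Sym2.mem_iff.1 hwew' with h4 | h4
        · rw [if_pos ⟨v, hvm, by rw [← h4]; exact hvw⟩]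
          exact h4.symm
        · rw [if_neg ?_]
          · exact h4.symm
          · rintro ⟨u, hum, hua⟩
            by_cases huv : u = v
            · subst huv
              have d1 : T.dist u ew.out.1 = 1 := adj_dist_eq_one hua
              have d2 : T.dist u ew.out.2 = 1 := adj_dist_eq_one (by rw [← h4]; exact hvw)
              rcases tree_adj_dist hT u hadjew with h5 | h5 <;> omega
            · exact aug1 ew.out.1 ew.out.2 (by rw [hsew]; exact hew) u v hum hvm huv hua
                (by rw [← h4]; exact hvw)
      right
      exact ⟨w, by rw [← hpw]; exact Finset.mem_image_of_mem pick hew, hvw.symm⟩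
  -- the two colour classes, as minimal dominating sets
  set A : Finset V := Finset.univ.filter (fun v => Even (T.dist x v)) with hA
  set B : Finset V := Finset.univ.filter (fun v => ¬Even (T.dist x v)) with hB
  have hpar : ∀ {a b : V}, T.Adj a b → (Even (T.dist x a) ↔ Even (T.dist x b)) → False := by
    intro a b h hiff
    rcases tree_adj_dist hT x h with h5 | h5 <;>
      · rw [h5, Nat.even_add_one] at hiff
        tauto
  have hAdom : IsDomSet T A := by
    intro v
    by_cases hv : Even (T.dist x v)
    · left; simp [hA, hv]
    · right
      have h0 : T.dist x v ≠ 0 := by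
        intro h0; rw [h0] at hv; exact hv Even.zero
      obtain ⟨u, huv, hd⟩ := exists_closer_nbr hconn x h0
      refine ⟨u, ?_, huv⟩
      simp only [hA, Finset.mem_filter, Finset.mem_univ, true_and]
      rw [← hd, Nat.even_add_one] at hv
      simpa using hv
  have hBdom : IsDomSet T B := by
    intro v
    by_cases hv : Even (T.dist x v)
    · right
      by_cases hvx : v = x
      · subst hvx
        refine ⟨y, ?_, hxy.symm⟩
        simp [hB, adj_dist_eq_one hxy]
      · have h0 : T.dist x v ≠ 0 := fun h0 => hvx ((hconn.dist_eq_zero_iff).1 h0).symm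
        obtain ⟨u, huv, hd⟩ := exists_closer_nbr hconn x h0
        refine ⟨u, ?_, huv⟩
        simp only [hB, Finset.mem_filter, Finset.mem_univ, true_and]
        rw [← hd, Nat.even_add_one] at hv
        simpa using hv
    · left
      simp only [hB, Finset.mem_filter, Finset.mem_univ, true_and]
      exact hv
  have hmin : ∀ C : Finset V, IsDomSet T C →
      (∀ a ∈ C, ∀ b ∈ C, T.Adj a b → False) → IsMinDomSet T C := by
    intro C hdom hind
    refine ⟨hdom, fun D' hsub hdom' => Finset.Subset.antisymm hsub ?_⟩
    intro v hvC
    rcases hdom' v with hv | ⟨u, huD', hadj⟩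
    · exact hv
    · exact (hind u (hsub huD') v hvC hadj).elim
  have hAmin : IsMinDomSet T A := by
    refine hmin A hAdom ?_
    intro a ha b hb hab
    simp only [hA, Finset.mem_filter, Finset.mem_univ, true_and] at ha hb
    exact hpar hab (iff_of_true ha hb)
  have hBmin : IsMinDomSet T B := by
    refine hmin B hBdom ?_
    intro a ha b hb hab
    simp only [hB, Finset.mem_filter, Finset.mem_univ, true_and] at ha hb
    exact hpar hab (iff_of_false ha hb)
  have hABcard : A.card + B.card = Fintype.card V := by
    rw [hA, hB, Finset.card_filter_add_card_filter_not, Finset.card_univ]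
  have hABeq : A.card = B.card := hunm A B hAmin hBmin
  -- counting matched vertices
  have hmscard : (Finset.univ.filter (fun v => ∃ f ∈ M, v ∈ f)).card = 2 * M.card := by
    have hsplit : Finset.univ.filter (fun v => ∃ f ∈ M, v ∈ f)
        = M.biUnion (fun f => Finset.univ.filter (fun v => v ∈ f)) := by
      ext v
      simp [Finset.mem_biUnion]
    rw [hsplit, Finset.card_biUnion]
    · have h2 : ∀ f ∈ M, (Finset.univ.filter (fun v => v ∈ f)).card = 2 := by
        intro f hf
        have hsf : s(f.out.1, f.out.2) = f := sym2_out f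
        have hadjf : T.Adj f.out.1 f.out.2 := by
          have h5 := hM.1 f hf
          rw [← hsf] at h5
          exact T.mem_edgeSet.1 h5
        obtain ⟨a, b, hab2, rfl⟩ : ∃ a b, T.Adj a b ∧ f = s(a, b) :=
          ⟨f.out.1, f.out.2, hadjf, hsf.symm⟩
        have heq : Finset.univ.filter (fun v => v ∈ s(a, b)) = {a, b} := by
          ext v
          simp [Sym2.mem_iff]
        rw [heq, Finset.card_insert_of_notMem (by simpa using hab2.ne), Finset.card_singleton]
      rw [Finset.sum_congr rfl h2, Finset.sum_const, smul_eq_mul, mul_comm]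
    · intro f hfM g hgM hfg
      rw [Function.onFun, Finset.disjoint_left]
      intro v hv1 hv2
      simp only [Finset.mem_filter, Finset.mem_univ, true_and] at hv1 hv2
      exact hM.2 f hfM g hgM hfg v ⟨hv1, hv2⟩
  -- stage 1 conclusion: every vertex is matched
  obtain ⟨D1', hD1sub, hD1min⟩ := exists_minDomSet_subset T (M.image pick) hD1dom
  have hA1 : A.card ≤ M.card := by
    have h1 : D1'.card ≤ (M.image pick).card := Finset.card_le_card hD1sub
    have h2 := Finset.card_image_le (s := M) (f := pick)
    have h3 := hunm A D1' hAmin hD1min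
    omega
  have hms_le : (Finset.univ.filter (fun v => ∃ f ∈ M, v ∈ f)).card ≤ Fintype.card V := by
    rw [← Finset.card_univ]
    exact Finset.card_le_univ _
  have huniv : ∀ v : V, ∃ f ∈ M, v ∈ f := by
    have hcard_eq : (Finset.univ.filter (fun v => ∃ f ∈ M, v ∈ f)).card = Fintype.card V := by
      omega
    have := Finset.eq_univ_of_card _ hcard_eq
    intro v
    have hv : v ∈ Finset.univ.filter (fun v => ∃ f ∈ M, v ∈ f) := by
      rw [this]; exact Finset.mem_univ v
    exact (Finset.mem_filter.1 hv).2
  have hn2M : 2 * M.card = Fintype.card V := by omega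
  -- stage 2: the parent construction
  set parent : Sym2 V → V := fun f =>
    if T.dist x f.out.1 < T.dist x f.out.2 then f.out.1 else f.out.2 with hparent
  have hparent_eq : ∀ a b : V, T.dist x a < T.dist x b → parent s(a, b) = a := by
    intro a b hd
    rw [hparent]; dsimp only
    have hout : s((s(a, b)).out.1, (s(a, b)).out.2) = s(a, b) := sym2_out _
    rcases Sym2.eq_iff.1 hout with ⟨h1, h2⟩ | ⟨h1, h2⟩
    · rw [h1, h2, if_pos hd]
    · rw [h1, h2, if_neg (by omega)]
  have hD2dom : IsDomSet T ((M.erase s(x, y)).image parent) := by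
    intro v
    obtain ⟨ev, hev, hvev⟩ := huniv v
    by_cases hevxy : ev = s(x, y)
    · subst hevxy
      rcases Sym2.mem_iff.1 hvev with h6 | h6
      · subst h6
        obtain ⟨u, huadj, huy⟩ : ∃ u, T.Adj v u ∧ u ≠ y := by
          have hy : y ∈ T.neighborFinset v := by
            rw [SimpleGraph.mem_neighborFinset]; exact hxy
          have hcard1 : 0 < (T.neighborFinset v).card := Finset.card_pos.2 ⟨y, hy⟩
          have hcard : 1 < (T.neighborFinset v).card := by
            rcases Nat.lt_or_ge 1 (T.neighborFinset v).card with h7 | h7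
            · exact h7
            · exfalso
              apply hdx
              rw [← SimpleGraph.card_neighborFinset_eq_degree]
              omega
          obtain ⟨u, hu1, hu2⟩ := Finset.exists_mem_ne hcard y
          exact ⟨u, (SimpleGraph.mem_neighborFinset _ _ _).1 hu1, hu2⟩
        obtain ⟨eu, heu, hueu⟩ := huniv u
        have heuxy : eu ≠ s(v, y) := by
          rintro rfl
          rcases Sym2.mem_iff.1 hueu with h7 | h7
          · exact huadj.ne h7.symm
          · exact huy h7
        obtain ⟨z, hz⟩ := Sym2.mem_iff_exists.1 hueu
        have hadjuz : T.Adj u z := by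
          have h7 := hM.1 eu heu
          rw [hz] at h7
          exact T.mem_edgeSet.1 h7
        have hzx : z ≠ v := by
          intro h8
          refine hM.2 eu heu s(v, y) he heuxy v ⟨?_, Sym2.mem_mk_left v y⟩
          rw [hz, ← h8]
          exact Sym2.mem_mk_right u z
        have hdxu : T.dist v u = 1 := adj_dist_eq_one huadj
        have hdxz2 : T.dist v u < T.dist v z := by
          rcases tree_adj_dist hT v hadjuz with h7 | h7
          · omega
          · exfalso
            have h8 : T.dist v z = 0 := by omega
            exact hzx ((hconn.dist_eq_zero_iff).1 h8).symm
        have hpu : parent eu = u := by rw [hz]; exact hparent_eq u z hdxz2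
        right
        refine ⟨u, ?_, huadj.symm⟩
        rw [← hpu]
        exact Finset.mem_image_of_mem parent (Finset.mem_erase.2 ⟨heuxy, heu⟩)
      · subst h6
        obtain ⟨w, hwadj, hwx⟩ : ∃ w, T.Adj v w ∧ w ≠ x := by
          have hy : x ∈ T.neighborFinset v := by
            rw [SimpleGraph.mem_neighborFinset]; exact hxy.symm
          have hcard1 : 0 < (T.neighborFinset v).card := Finset.card_pos.2 ⟨x, hy⟩
          have hcard : 1 < (T.neighborFinset v).card := by
            rcases Nat.lt_or_ge 1 (T.neighborFinset v).card with h7 | h7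
            · exact h7
            · exfalso
              apply hdy
              rw [← SimpleGraph.card_neighborFinset_eq_degree]
              omega
          obtain ⟨w, hw1, hw2⟩ := Finset.exists_mem_ne hcard x
          exact ⟨w, (SimpleGraph.mem_neighborFinset _ _ _).1 hw1, hw2⟩
        obtain ⟨ew, hew, hwew⟩ := huniv w
        have hewxy : ew ≠ s(x, v) := by
          rintro rfl
          rcases Sym2.mem_iff.1 hwew with h7 | h7
          · exact hwx h7
          · exact hwadj.ne h7.symm
        obtain ⟨z, hz⟩ := Sym2.mem_iff_exists.1 hwew
        have hadjwz : T.Adj w z := by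
          have h7 := hM.1 ew hew
          rw [hz] at h7
          exact T.mem_edgeSet.1 h7
        have hzx : z ≠ x := by
          intro h8
          refine hM.2 ew hew s(x, v) he hewxy x ⟨?_, Sym2.mem_mk_left x v⟩
          rw [hz, ← h8]
          exact Sym2.mem_mk_right w z
        have hzy : z ≠ v := by
          intro h8
          refine hM.2 ew hew s(x, v) he hewxy v ⟨?_, Sym2.mem_mk_right x v⟩
          rw [hz, ← h8]
          exact Sym2.mem_mk_right w z
        have hdxy1 : T.dist x v = 1 := adj_dist_eq_one hxy
        have hdxw : T.dist x w = 2 := by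
          rcases tree_adj_dist hT x hwadj with h7 | h7
          · omega
          · exfalso
            have h8 : T.dist x w = 0 := by omega
            exact hwx ((hconn.dist_eq_zero_iff).1 h8).symm
        have hdxz : T.dist x w < T.dist x z := by
          rcases tree_adj_dist hT x hadjwz with h7 | h7
          · omega
          · exfalso
            have h8 : T.dist x z = 1 := by omega
            have hadjxz : T.Adj x z := SimpleGraph.dist_eq_one_iff_adj.1 h8
            have hp1 : (SimpleGraph.Walk.cons hxy.symm
                (SimpleGraph.Walk.cons hadjxz SimpleGraph.Walk.nil) : T.Walk v z).IsPath := by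
              simp [SimpleGraph.Walk.isPath_def, hxy.ne', hadjxz.ne, Ne.symm hzy]
            have hp2 : (SimpleGraph.Walk.cons hwadj
                (SimpleGraph.Walk.cons hadjwz SimpleGraph.Walk.nil) : T.Walk v z).IsPath := by
              simp [SimpleGraph.Walk.isPath_def, hwadj.ne, hadjwz.ne, Ne.symm hzy]
            have hequ := hT.IsAcyclic.path_unique ⟨_, hp1⟩ ⟨_, hp2⟩
            have hsup := congrArg (fun p : T.Path v z => p.1.support) hequ
            simp only [SimpleGraph.Walk.support_cons, SimpleGraph.Walk.support_nil] at hsup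
            have h9 : x = w := by simpa using hsup
            exact hwx h9.symm
        have hpw : parent ew = w := by rw [hz]; exact hparent_eq w z hdxz
        right
        refine ⟨w, ?_, hwadj.symm⟩
        rw [← hpw]
        exact Finset.mem_image_of_mem parent (Finset.mem_erase.2 ⟨hewxy, hew⟩)
    · obtain ⟨b, hb⟩ := Sym2.mem_iff_exists.1 hvev
      have hadjvb : T.Adj v b := by
        have h5 := hM.1 ev hev
        rw [hb] at h5
        exact T.mem_edgeSet.1 h5
      rcases tree_adj_dist hT x hadjvb with h5 | h5
      · left
        have hpv : parent ev = v := by rw [hb]; exact hparent_eq v b (by omega)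
        rw [← hpv]
        exact Finset.mem_image_of_mem parent (Finset.mem_erase.2 ⟨hevxy, hev⟩)
      · right
        have hpb : parent ev = b := by
          rw [hb, Sym2.eq_swap]
          exact hparent_eq b v (by omega)
        refine ⟨b, ?_, hadjvb.symm⟩
        rw [← hpb]
        exact Finset.mem_image_of_mem parent (Finset.mem_erase.2 ⟨hevxy, hev⟩)
  -- final contradiction
  obtain ⟨D2', hD2sub, hD2min⟩ := exists_minDomSet_subset T _ hD2dom
  have h1 : D2'.card ≤ ((M.erase s(x, y)).image parent).card := Finset.card_le_card hD2sub
  have h2 : ((M.erase s(x, y)).image parent).card ≤ (M.erase s(x, y)).card :=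
    Finset.card_image_le
  have h3 : (M.erase s(x, y)).card = M.card - 1 := Finset.card_erase_of_mem he
  have h4 := hunm A D2' hAmin hD2min
  have h5 : 0 < M.card := Finset.card_pos.2 ⟨_, he⟩
  omega
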